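/- The Toeplitz matrix T_n(x) has symmetrized cycle-sums: for every 2 ≤ k ≤ n and every subset S ⊆ {1,...,n} with |S| = k, the cycle-sum C_S(T_n(x)) equals x^{−k}·Σ_{w ∈ S_{k−1}} (−x²)^{des(w)+1}, where des(w) is the number of descents of the permutation w. In particular C_S depends only on |S|. -/

import Mathlib

open scoped Classical

/-- The cycle-sum `C_S(A)`: sum over all cyclic orderings of `S` of the
corresponding cyclic products of entries of `A`. -/
noncomputable def cycleSum {n : ℕ} (A : Matrix (Fin n) (Fin n) ℂ) (S : Finset (Fin n)) : ℂ :=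
  ∑ σ ∈ Finset.univ.filter
      (fun σ : Equiv.Perm (Fin n) =>
        σ.IsCycleOn (S : Set (Fin n)) ∧ ∀ i ∉ S, σ i = i),
    ∏ i ∈ S, A i (σ i)

/-- The principal minor of `A` with row and column set `S`. -/
noncomputable def pminor {n : ℕ} (A : Matrix (Fin n) (Fin n) ℂ) (S : Finset (Fin n)) : ℂ :=
  (A.submatrix (fun i : S => (i : Fin n)) (fun i : S => (i : Fin n))).det

/-- The Toeplitz matrix `T_n(x)` with `(i,j)` entry `sgn(j-i)·x^(j-i-sgn(j-i))`,
i.e. `x^(j-i-1)` above the diagonal, `-(x⁻¹)^(i-j-1)` below, `0` on the diagonal. -/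
noncomputable def toeplitzT (n : ℕ) (x : ℂ) : Matrix (Fin n) (Fin n) ℂ :=
  Matrix.of fun i j =>
    if (i : ℕ) < (j : ℕ) then x ^ ((j : ℕ) - (i : ℕ) - 1)
    else if (j : ℕ) < (i : ℕ) then -(x⁻¹) ^ ((i : ℕ) - (j : ℕ) - 1)
    else 0

/-- The number of descents of a permutation `w` of `Fin m`, viewed as the word
`w(0) w(1) ⋯ w(m-1)`. -/
noncomputable def descents {m : ℕ} (w : Equiv.Perm (Fin m)) : ℕ :=
  (Finset.univ.filter (fun i : Fin m =>
    ∃ h : (i : ℕ) + 1 < m, w ⟨(i : ℕ) + 1, h⟩ < w i)).card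

open Finset Equiv

/-- extend a perm of `Fin m` to `Fin (m+1)` fixing `0`, shifting by `succ`. -/
def ext1 {m : ℕ} (w : Equiv.Perm (Fin m)) : Equiv.Perm (Fin (m + 1)) where
  toFun := Fin.cases 0 (fun j => (w j).succ)
  invFun := Fin.cases 0 (fun j => (w.symm j).succ)
  left_inv i := by cases i using Fin.cases <;> simp
  right_inv i := by cases i using Fin.cases <;> simp

@[simp] lemma ext1_zero {m : ℕ} (w : Equiv.Perm (Fin m)) : ext1 w 0 = 0 := rfl
@[simp] lemma ext1_succ {m : ℕ} (w : Equiv.Perm (Fin m)) (j : Fin m) :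
    ext1 w j.succ = (w j).succ := by
  show (Fin.cases 0 (fun j => (w j).succ) j.succ : Fin (m+1)) = _
  simp

lemma entry_eq {n : ℕ} (x : ℂ) (hx : x ≠ 0) (i j : Fin n) (hij : i ≠ j) :
    toeplitzT n x i j =
      (if j < i then -(x ^ 2) else 1) * (x⁻¹ * (x ^ ((j : ℕ) : ℤ) * (x ^ ((i : ℕ) : ℤ))⁻¹)) := by
  have hgen : ∀ a b : ℤ, x ^ (a - b - 1) = x⁻¹ * (x ^ a * (x ^ b)⁻¹) := by
    intro a b
    rw [zpow_sub₀ hx, zpow_sub₀ hx, zpow_one]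
    field_simp
  have hlt : ∀ a b : Fin n, a < b ↔ (a : ℕ) < (b : ℕ) := fun a b => Iff.rfl
  rcases lt_trichotomy i j with h | h | h
  · have h' : (i : ℕ) < (j : ℕ) := h
    rw [if_neg (not_lt.2 h.le), one_mul]
    simp only [toeplitzT, Matrix.of_apply, if_pos h']
    rw [← hgen, ← zpow_natCast x]
    congr 1
    omega
  · exact absurd h hij
  · have h' : (j : ℕ) < (i : ℕ) := h
    rw [if_pos h]
    simp only [toeplitzT, Matrix.of_apply, if_pos h']
    rw [if_neg (by omega : ¬ ((i:ℕ) < (j:ℕ))), ← hgen, inv_pow, ← zpow_natCast x, ← zpow_neg]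
    have : -(x ^ 2) * x ^ (((j:ℕ):ℤ) - ((i:ℕ):ℤ) - 1) = -(x ^ (2 + (((j:ℕ):ℤ) - ((i:ℕ):ℤ) - 1))) := by
      rw [zpow_add₀ hx, neg_mul]
      norm_num
    rw [this]
    have hexp : (-((((i:ℕ) - (j:ℕ) - 1 : ℕ)):ℤ)) = 2 + (((j:ℕ):ℤ) - ((i:ℕ):ℤ) - 1) := by omega
    rw [hexp]

section
variable {n : ℕ}

lemma prod_toeplitz (x : ℂ) (hx : x ≠ 0) (S : Finset (Fin n)) (hS : 2 ≤ S.card)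
    (σ : Equiv.Perm (Fin n)) (hσ : σ.IsCycleOn (S : Set (Fin n))) :
    ∀ (T : Matrix (Fin n) (Fin n) ℂ),
    (∀ i j : Fin n, i ≠ j → T i j =
      (if j < i then -(x ^ 2) else 1) * (x⁻¹ * (x ^ ((j : ℕ) : ℤ) * (x ^ ((i : ℕ) : ℤ))⁻¹))) →
    ∏ i ∈ S, T i (σ i) =
      x⁻¹ ^ S.card * (-(x ^ 2)) ^ (S.filter (fun i => σ i < i)).card := by
  intro T hT
  have hnt : (S : Set (Fin n)).Nontrivial := by
    obtain ⟨a, ha, b, hb, hab⟩ := Finset.one_lt_card.1 (show 1 < S.card by omega)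
    exact ⟨a, ha, b, hb, hab⟩
  have hne : ∀ i ∈ S, i ≠ σ i := fun i hi => (hσ.apply_ne hnt hi).symm
  rw [Finset.prod_congr rfl (fun i hi => hT i (σ i) (hne i hi))]
  rw [Finset.prod_mul_distrib, Finset.prod_mul_distrib, Finset.prod_mul_distrib]
  have h1 : (∏ i ∈ S, if σ i < i then -(x ^ 2) else 1) =
      (-(x ^ 2)) ^ (S.filter (fun i => σ i < i)).card := by
    rw [Finset.prod_ite, Finset.prod_const, Finset.prod_const_one, mul_one]
  have h2 : (∏ _i ∈ S, x⁻¹) = x⁻¹ ^ S.card := Finset.prod_const _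
  have himg : S.image σ = S := by
    apply Finset.coe_injective
    rw [Finset.coe_image]
    exact hσ.1.image_eq
  have h3 : (∏ i ∈ S, x ^ ((σ i : ℕ) : ℤ)) = ∏ i ∈ S, x ^ ((i : ℕ) : ℤ) := by
    conv_rhs => rw [← himg, Finset.prod_image (fun a _ b _ h => σ.injective h)]
  have hprodne : (∏ i ∈ S, x ^ ((i : ℕ) : ℤ)) ≠ 0 :=
    Finset.prod_ne_zero_iff.2 fun i _ => zpow_ne_zero _ hx
  rw [h1, h2, h3, Finset.prod_inv_distrib, mul_inv_cancel₀ hprodne]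
  ring

end

section
variable {n : ℕ} (S : Finset (Fin n)) {k : ℕ} (hk : S.card = k + 2)

/-- the word-to-cycle map -/
noncomputable def wlist (w : Equiv.Perm (Fin (k + 1))) : List (Fin n) :=
  List.ofFn (fun i : Fin (k + 2) => S.orderEmbOfFin hk (ext1 w i))

noncomputable def wperm (w : Equiv.Perm (Fin (k + 1))) : Equiv.Perm (Fin n) :=
  (wlist S hk w).formPerm

lemma wlist_length (w : Equiv.Perm (Fin (k + 1))) : (wlist S hk w).length = k + 2 := by
  simp [wlist]

lemma wlist_get (w : Equiv.Perm (Fin (k + 1))) (i : ℕ) (h : i < (wlist S hk w).length) :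
    (wlist S hk w)[i] = S.orderEmbOfFin hk (ext1 w ⟨i, by rw [wlist_length] at h; exact h⟩) := by
  simp only [wlist]
  rw [List.getElem_ofFn]

lemma wlist_nodup (w : Equiv.Perm (Fin (k + 1))) : (wlist S hk w).Nodup := by
  rw [wlist, List.nodup_ofFn]
  exact fun a b hab => (ext1 w).injective ((S.orderEmbOfFin hk).injective hab)

lemma wlist_mem (w : Equiv.Perm (Fin (k + 1))) (a : Fin n) : a ∈ wlist S hk w ↔ a ∈ S := by
  rw [wlist, List.mem_ofFn]
  constructor
  · rintro ⟨i, rfl⟩; exact S.orderEmbOfFin_mem hk _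
  · intro ha
    have : a ∈ Set.range (S.orderEmbOfFin hk) := by rw [S.range_orderEmbOfFin hk]; exact ha
    obtain ⟨t, rfl⟩ := this
    exact ⟨(ext1 w).symm t, by simp⟩

lemma wperm_mem (w : Equiv.Perm (Fin (k + 1))) :
    (wperm S hk w).IsCycleOn (S : Set (Fin n)) ∧ ∀ i ∉ S, wperm S hk w i = i := by
  constructor
  · have := (wlist_nodup S hk w).isCycleOn_formPerm
    convert this using 2
    · rfl
    ext a
    simp [wlist_mem]
  · intro i hi
    exact List.formPerm_apply_of_notMem (by rw [wlist_mem]; exact hi)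

lemma wperm_apply (w : Equiv.Perm (Fin (k + 1))) (i : Fin (k + 2)) :
    wperm S hk w (S.orderEmbOfFin hk (ext1 w i)) = S.orderEmbOfFin hk (ext1 w (i + 1)) := by
  have h1 : (i : ℕ) < (wlist S hk w).length := by rw [wlist_length]; exact i.isLt
  have := List.formPerm_apply_getElem _ (wlist_nodup S hk w) i h1
  rw [wlist_get, wlist_get] at this
  rw [wperm]
  convert this using 3
  apply Fin.ext
  simp [Fin.add_def, wlist_length]


open Fin.NatCast in
lemma wperm_pow (w : Equiv.Perm (Fin (k + 1))) : ∀ m : ℕ,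
    (wperm S hk w ^ m) (S.orderEmbOfFin hk 0) = S.orderEmbOfFin hk (ext1 w (m : Fin (k + 2)))
  | 0 => by simp
  | (m + 1) => by
    rw [pow_succ', Equiv.Perm.mul_apply, wperm_pow w m, wperm_apply]
    congr 1
    push_cast
    rfl

open Fin.NatCast in
lemma wperm_inj (w w' : Equiv.Perm (Fin (k + 1))) (h : wperm S hk w = wperm S hk w') :
    w = w' := by
  have hext : ∀ i : Fin (k + 2), ext1 w i = ext1 w' i := by
    intro i
    have e1 := wperm_pow S hk w (i : ℕ)
    have e2 := wperm_pow S hk w' (i : ℕ)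
    rw [h] at e1
    have := (S.orderEmbOfFin hk).injective (e1.symm.trans e2)
    rwa [Fin.cast_val_eq_self] at this
  apply Equiv.ext
  intro j
  have := hext j.succ
  rw [ext1_succ, ext1_succ] at this
  exact Fin.succ_injective _ this

lemma wperm_surj (σ : Equiv.Perm (Fin n)) (hc : σ.IsCycleOn (S : Set (Fin n)))
    (hfix : ∀ i ∉ S, σ i = i) : ∃ w : Equiv.Perm (Fin (k + 1)), wperm S hk w = σ := by
  have h0 : S.orderEmbOfFin hk 0 ∈ S := S.orderEmbOfFin_mem hk 0
  set f := ⇑(S.orderEmbOfFin hk) with hfdef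
  have hmemS : ∀ m : ℕ, (σ ^ m) (f 0) ∈ S := fun m => hc.1.mapsTo.perm_pow m h0
  have hper : ∀ {a b : ℕ}, (σ ^ a) (f 0) = (σ ^ b) (f 0) ↔ a ≡ b [MOD k + 2] := by
    intro a b; rw [hc.pow_apply_eq_pow_apply h0, hk]
  set ve : Fin (k + 1) → Fin (k + 2) :=
    fun j => (S.orderIsoOfFin hk).symm ⟨(σ ^ ((j : ℕ) + 1)) (f 0), hmemS _⟩ with hve
  have hfve : ∀ j, f (ve j) = (σ ^ ((j : ℕ) + 1)) (f 0) := by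
    intro j
    show (S.orderEmbOfFin hk) ((S.orderIsoOfFin hk).symm _) = _
    rw [← S.coe_orderIsoOfFin_apply hk, OrderIso.apply_symm_apply]
  have hve0 : ∀ j, ve j ≠ 0 := by
    intro j hj
    have h1 : f (ve j) = f 0 := by rw [hj]
    rw [hfve] at h1
    have h2 : (j : ℕ) + 1 ≡ 0 [MOD k + 2] := hper.1 (h1.trans (by simp))
    have := j.isLt
    simp only [Nat.ModEq, Nat.zero_mod] at h2
    rw [Nat.mod_eq_of_lt (by omega)] at h2
    omega
  set v : Fin (k + 1) → Fin (k + 1) := fun j => (ve j).pred (hve0 j) with hv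
  have hvinj : Function.Injective v := by
    intro a b hab
    have hveab : ve a = ve b := by
      rw [← Fin.succ_pred (ve a) (hve0 a), ← Fin.succ_pred (ve b) (hve0 b)]
      exact congrArg Fin.succ hab
    have := congrArg f hveab
    rw [hfve, hfve] at this
    have h2 := hper.1 this
    have ha := a.isLt; have hb := b.isLt
    simp only [Nat.ModEq] at h2
    rw [Nat.mod_eq_of_lt (by omega), Nat.mod_eq_of_lt (by omega)] at h2
    exact Fin.ext (by omega)
  set w := Equiv.ofBijective v (Finite.injective_iff_bijective.1 hvinj) with hw
  have hfe : ∀ (m : ℕ) (hm : m < k + 2), f (ext1 w ⟨m, hm⟩) = (σ ^ m) (f 0) := by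
    intro m hm
    cases m with
    | zero => simp
    | succ m' =>
      have hm' : m' < k + 1 := by omega
      have hmk : (⟨m' + 1, hm⟩ : Fin (k + 2)) = (⟨m', hm'⟩ : Fin (k + 1)).succ := by
        rw [Fin.succ_mk]
      rw [hmk, ext1_succ]
      show f (((ve ⟨m', hm'⟩).pred (hve0 _)).succ) = _
      rw [Fin.succ_pred]
      exact hfve _
  refine ⟨w, Equiv.ext fun a => ?_⟩
  by_cases ha : a ∈ S
  · obtain ⟨m, hm, rfl⟩ := hc.exists_pow_eq h0 ha
    have hm2 : m < k + 2 := by rw [hk] at hm; exact hm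
    calc wperm S hk w ((σ ^ m) (f 0))
        = wperm S hk w (f (ext1 w ⟨m, hm2⟩)) := by rw [hfe]
      _ = f (ext1 w (⟨m, hm2⟩ + 1)) := wperm_apply S hk w _
      _ = (σ ^ ((m + 1) % (k + 2))) (f 0) := by
          have : (⟨m, hm2⟩ + 1 : Fin (k + 2)) =
              ⟨(m + 1) % (k + 2), Nat.mod_lt _ (by omega)⟩ := by
            apply Fin.ext; simp [Fin.add_def]
          rw [this, hfe]
      _ = (σ ^ (m + 1)) (f 0) := hper.2 (Nat.mod_modEq _ _)
      _ = σ ((σ ^ m) (f 0)) := by rw [pow_succ']; rfl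
  · rw [hfix a ha]
    exact (wperm_mem S hk w).2 a ha

lemma descent_count (w : Equiv.Perm (Fin (k + 1))) :
    (S.filter (fun a => wperm S hk w a < a)).card = descents w + 1 := by
  set f := ⇑(S.orderEmbOfFin hk) with hfdef
  have hinj : Function.Injective (fun i : Fin (k + 2) => f (ext1 w i)) :=
    fun a b hab => (ext1 w).injective ((S.orderEmbOfFin hk).injective hab)
  have himg : S = Finset.image (fun i : Fin (k + 2) => f (ext1 w i)) Finset.univ := by
    ext a
    simp only [Finset.mem_image, Finset.mem_univ, true_and]
    constructor
    · intro ha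
      have : a ∈ Set.range (S.orderEmbOfFin hk) := by
        rw [S.range_orderEmbOfFin hk]; exact ha
      obtain ⟨t, rfl⟩ := this
      exact ⟨(ext1 w).symm t, by simp [hfdef]⟩
    · rintro ⟨i, rfl⟩
      exact S.orderEmbOfFin_mem hk _
  have hfilter : S.filter (fun a => wperm S hk w a < a) =
      (Finset.image (fun i : Fin (k + 2) => f (ext1 w i)) Finset.univ).filter
        (fun a => wperm S hk w a < a) := by rw [← himg]
  rw [hfilter, Finset.filter_image, Finset.card_image_of_injective _ hinj]
  have hQ : Finset.univ.filter (fun i : Fin (k + 2) => wperm S hk w (f (ext1 w i)) < f (ext1 w i))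
      = Finset.univ.filter (fun i : Fin (k + 2) => ext1 w (i + 1) < ext1 w i) := by
    apply Finset.filter_congr
    intro i _
    rw [show wperm S hk w (f (ext1 w i)) = f (ext1 w (i + 1)) from wperm_apply S hk w i]
    exact (S.orderEmbOfFin hk).lt_iff_lt
  rw [hQ]
  have hins : Finset.univ.filter (fun i : Fin (k + 2) => ext1 w (i + 1) < ext1 w i) =
      insert (Fin.last (k + 1))
        ((Finset.univ.filter (fun j : Fin (k + 1) =>
          ∃ h : (j : ℕ) + 1 < k + 1, w ⟨(j : ℕ) + 1, h⟩ < w j)).image Fin.succ) := by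
    ext i
    simp only [Finset.mem_filter, Finset.mem_univ, true_and, Finset.mem_insert,
      Finset.mem_image]
    constructor
    · intro hQi
      rcases eq_or_ne i (Fin.last (k + 1)) with rfl | hil
      · exact Or.inl rfl
      right
      have hi0 : i ≠ 0 := by
        rintro rfl
        have h1 : (0 : Fin (k + 2)) + 1 = (0 : Fin (k + 1)).succ := by
          apply Fin.ext; simp
        rw [h1, ext1_succ, ext1_zero] at hQi
        exact (Fin.not_lt_zero _) hQi
      set j := i.pred hi0 with hj
      have hij : i = j.succ := (Fin.succ_pred i hi0).symm
      have hik : (i : ℕ) < k + 1 := by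
        rcases Nat.lt_or_ge (i : ℕ) (k + 1) with h | h
        · exact h
        · exact absurd (Fin.ext (by omega : (i : ℕ) = k + 1)) hil
      have hjk : (j : ℕ) + 1 < k + 1 := by
        have : (j : ℕ) + 1 = (i : ℕ) := by rw [hij]; simp
        omega
      refine ⟨j, ⟨hjk, ?_⟩, hij.symm⟩
      rw [hij] at hQi
      have hsucc : (j.succ : Fin (k + 2)) + 1 = (⟨(j : ℕ) + 1, hjk⟩ : Fin (k + 1)).succ := by
        apply Fin.ext
        simp [Fin.add_def, Nat.mod_eq_of_lt (show (j : ℕ) + 1 + 1 < k + 2 by omega)]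
      rw [hsucc, ext1_succ, ext1_succ, Fin.succ_lt_succ_iff] at hQi
      exact hQi
    · rintro (rfl | ⟨j, ⟨hjk, hw⟩, rfl⟩)
      · rw [Fin.last_add_one, ext1_zero]
        have hl : Fin.last (k + 1) = (Fin.last k).succ := (Fin.succ_last k).symm
        rw [hl, ext1_succ]
        exact Fin.succ_pos _
      · have hsucc : (j.succ : Fin (k + 2)) + 1 = (⟨(j : ℕ) + 1, hjk⟩ : Fin (k + 1)).succ := by
          apply Fin.ext
          simp [Fin.add_def, Nat.mod_eq_of_lt (show (j : ℕ) + 1 + 1 < k + 2 by omega)]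
        rw [hsucc, ext1_succ, ext1_succ, Fin.succ_lt_succ_iff]
        exact hw
  rw [hins, Finset.card_insert_of_notMem, Finset.card_image_of_injective _ (Fin.succ_injective _),
    descents]
  intro hmem
  obtain ⟨j, hj, hje⟩ := Finset.mem_image.1 hmem
  have : j = Fin.last k := by
    apply Fin.succ_injective
    rw [hje, Fin.succ_last]
  subst this
  obtain ⟨hlt, -⟩ := (Finset.mem_filter.1 hj).2
  simp at hlt

end

/-- The Toeplitz matrix `T_n(x)` has symmetrized cycle-sums given by signed,
rescaled Eulerian polynomials:
`C_S(T_n(x)) = x^{-k} Σ_{w ∈ S_{k-1}} (-x²)^(des(w)+1)` for `|S| = k ≥ 2`. -/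

theorem stmt15 (n : ℕ) (x : ℂ) (hx : x ≠ 0) (S : Finset (Fin n)) (hS : 2 ≤ S.card) :
    cycleSum (toeplitzT n x) S =
      (x⁻¹) ^ S.card *
        ∑ w : Equiv.Perm (Fin (S.card - 1)), (-(x ^ 2)) ^ (descents w + 1) := by
  obtain ⟨k, hk⟩ : ∃ k, S.card = k + 2 := ⟨S.card - 2, by omega⟩
  rw [hk]
  rw [cycleSum]
  have hstep : ∀ σ ∈ Finset.univ.filter
      (fun σ : Equiv.Perm (Fin n) =>
        σ.IsCycleOn (S : Set (Fin n)) ∧ ∀ i ∉ S, σ i = i),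
      ∏ i ∈ S, toeplitzT n x i (σ i) =
        x⁻¹ ^ S.card * (-(x ^ 2)) ^ ((S.filter fun i => σ i < i)).card := by
    intro σ hσ
    obtain ⟨-, hc, -⟩ := Finset.mem_filter.1 hσ
    exact prod_toeplitz x hx S (by omega) σ hc _ (fun i j hij => entry_eq x hx i j hij)
  rw [Finset.sum_congr rfl hstep, hk, ← Finset.mul_sum]
  congr 1
  symm
  apply Finset.sum_bij (i := fun (w : Equiv.Perm (Fin (k + 1))) _ => wperm S hk w)
  · intro w _
    rw [Finset.mem_filter]
    exact ⟨Finset.mem_univ _, wperm_mem S hk w⟩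
  · intro a _ b _ h
    exact wperm_inj S hk a b h
  · intro σ hσ
    obtain ⟨-, hc, hfix⟩ := Finset.mem_filter.1 hσ
    obtain ⟨w, hw⟩ := wperm_surj S hk σ hc hfix
    exact ⟨w, Finset.mem_univ _, hw⟩
  · intro w _
    rw [descent_count S hk w]
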